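/- arXiv:2004.08437 — 3 statements merged into one kernel-verified Lean document; each statement's English description precedes it below -/
import Mathlib

section
/- Let μ1, μ2 be nonzero real numbers and set μ3 = μ1, μ4 = μ2, and let D = diag(μ1, μ2, μ3, μ4). The weighted Hessian D⁻¹H, where H is the Hessian matrix of V at the point (0, π/2, π, 3π/2), has characteristic polynomial X · (X − (2μ1 − 3μ2)/2) · (X − (−3μ1 + 2μ2)/2) · (X − (μ1 + μ2)); equivalently, its eigenvalues are 0, (2μ1 − 3μ2)/2, (−3μ1 + 2μ2)/2, and μ1 + μ2. -/
open Real Polynomial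

/-- The potential `V` for the (1+4)-vortex problem with circulation
parameters `μ` and angular positions `θ`. -/
noncomputable def V (μ θ : Fin 4 → ℝ) : ℝ :=
  -∑ i : Fin 4, ∑ j ∈ Finset.Ioi i,
      μ i * μ j *
        (Real.cos (θ i - θ j) + (1 / 2) * Real.log (2 - 2 * Real.cos (θ i - θ j)))

/-- The partial derivative `∂V/∂θ_k` at the point `θ`. -/
noncomputable def partialV (μ θ : Fin 4 → ℝ) (k : Fin 4) : ℝ :=
  deriv (fun t => V μ (Function.update θ k t)) (θ k)

/-- `θ` is a critical point of `V`: all four partial derivatives vanish. -/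
def IsCriticalPt (μ θ : Fin 4 → ℝ) : Prop :=
  ∀ k : Fin 4, partialV μ θ k = 0

/-- The Hessian matrix of `V` at `θ`, `H k l = ∂²V/∂θ_k ∂θ_l`. -/
noncomputable def hessV (μ θ : Fin 4 → ℝ) : Matrix (Fin 4) (Fin 4) ℝ :=
  fun k l => deriv (fun t => partialV μ (Function.update θ k t) l) (θ k)


noncomputable def gg (x : ℝ) : ℝ := Real.cos x + (1/2) * Real.log (2 - 2*Real.cos x)
noncomputable def gg1 (x : ℝ) : ℝ := -Real.sin x + Real.sin x / (2 - 2*Real.cos x)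
noncomputable def gg2 (x : ℝ) : ℝ := -Real.cos x - 1 / (2 - 2*Real.cos x)

lemma den_ne {x : ℝ} (hx : Real.cos x ≠ 1) : (2 - 2*Real.cos x) ≠ 0 := by
  intro h; apply hx; linarith

lemma gg1_neg (y : ℝ) : gg1 (-y) = -gg1 y := by
  simp [gg1]; ring

lemma hasDerivAt_gg (x : ℝ) (hx : Real.cos x ≠ 1) : HasDerivAt gg (gg1 x) x := by
  have h0 := den_ne hx
  have d1 : HasDerivAt (fun y => 2 - 2*Real.cos y) (2*Real.sin x) x := by
    have := ((Real.hasDerivAt_cos x).const_mul (2:ℝ)).const_sub 2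
    exact this.congr_deriv (by ring)
  have d2 : HasDerivAt (fun y => Real.log (2 - 2*Real.cos y))
      ((2*Real.sin x) / (2 - 2*Real.cos x)) x := d1.log h0
  have d3 := (Real.hasDerivAt_cos x).add (d2.const_mul (1/2:ℝ))
  have : -Real.sin x + 1/2 * ((2*Real.sin x) / (2 - 2*Real.cos x)) = gg1 x := by
    simp [gg1]; ring
  rw [← this]; exact d3

lemma hasDerivAt_gg1 (x : ℝ) (hx : Real.cos x ≠ 1) : HasDerivAt gg1 (gg2 x) x := by
  have h0 := den_ne hx
  have d1 : HasDerivAt (fun y => 2 - 2*Real.cos y) (2*Real.sin x) x := by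
    have := ((Real.hasDerivAt_cos x).const_mul (2:ℝ)).const_sub 2
    exact this.congr_deriv (by ring)
  have d2 := ((Real.hasDerivAt_sin x).div d1 h0)
  have d3 := (Real.hasDerivAt_sin x).neg.add d2
  have : -Real.cos x + (Real.cos x * (2 - 2*Real.cos x) - Real.sin x * (2*Real.sin x))
      / (2 - 2*Real.cos x)^2 = gg2 x := by
    have hs := Real.sin_sq_add_cos_sq x
    simp only [gg2]
    field_simp
    nlinarith [hs]
  rw [← this]; exact d3

lemma V_expand (μ φ : Fin 4 → ℝ) : V μ φ =
    -(μ 0 * μ 1 * gg (φ 0 - φ 1) + μ 0 * μ 2 * gg (φ 0 - φ 2) + μ 0 * μ 3 * gg (φ 0 - φ 3)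
      + μ 1 * μ 2 * gg (φ 1 - φ 2) + μ 1 * μ 3 * gg (φ 1 - φ 3)
      + μ 2 * μ 3 * gg (φ 2 - φ 3)) := by
  rw [V]
  rw [Fin.sum_univ_four]
  rw [show Finset.Ioi (0:Fin 4) = {1,2,3} from by decide,
      show Finset.Ioi (1:Fin 4) = {2,3} from by decide,
      show Finset.Ioi (2:Fin 4) = {3} from by decide,
      show Finset.Ioi (3:Fin 4) = ∅ from by decide]
  simp [Finset.sum_insert, gg]
  ring

lemma dgR (c x : ℝ) (hc : Real.cos (x - c) ≠ 1) :
    HasDerivAt (fun t => gg (t - c)) (gg1 (x - c)) x := by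
  have h := (hasDerivAt_gg (x - c) hc).comp x ((hasDerivAt_id x).sub_const c)
  exact h.congr_deriv (by ring)

lemma dgL (c x : ℝ) (hc : Real.cos (c - x) ≠ 1) :
    HasDerivAt (fun t => gg (c - t)) (-gg1 (c - x)) x := by
  have h := (hasDerivAt_gg (c - x) hc).comp x ((hasDerivAt_id x).const_sub c)
  exact h.congr_deriv (by ring)

lemma dg1R (c x : ℝ) (hc : Real.cos (x - c) ≠ 1) :
    HasDerivAt (fun t => gg1 (t - c)) (gg2 (x - c)) x := by
  have h := (hasDerivAt_gg1 (x - c) hc).comp x ((hasDerivAt_id x).sub_const c)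
  exact h.congr_deriv (by ring)

lemma dg1L (c x : ℝ) (hc : Real.cos (c - x) ≠ 1) :
    HasDerivAt (fun t => gg1 (c - t)) (-gg2 (c - x)) x := by
  have h := (hasDerivAt_gg1 (c - x) hc).comp x ((hasDerivAt_id x).const_sub c)
  exact h.congr_deriv (by ring)

lemma pV0 (μ ψ : Fin 4 → ℝ) (ha : Real.cos (ψ 0 - ψ 1) ≠ 1)
    (hb : Real.cos (ψ 0 - ψ 2) ≠ 1) (hd : Real.cos (ψ 0 - ψ 3) ≠ 1) :
    partialV μ ψ 0 = -(μ 0 * μ 1 * gg1 (ψ 0 - ψ 1) + μ 0 * μ 2 * gg1 (ψ 0 - ψ 2)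
      + μ 0 * μ 3 * gg1 (ψ 0 - ψ 3)) := by
  have hfun : (fun t => V μ (Function.update ψ 0 t)) =
      fun t => -(μ 0 * μ 1 * gg (t - ψ 1) + μ 0 * μ 2 * gg (t - ψ 2)
        + μ 0 * μ 3 * gg (t - ψ 3)
        + (μ 1 * μ 2 * gg (ψ 1 - ψ 2) + μ 1 * μ 3 * gg (ψ 1 - ψ 3)
          + μ 2 * μ 3 * gg (ψ 2 - ψ 3))) := by
    funext t
    rw [V_expand]
    simp [Function.update_apply]
    try ring
  rw [partialV, hfun]
  have h : HasDerivAt (fun t => -(μ 0 * μ 1 * gg (t - ψ 1) + μ 0 * μ 2 * gg (t - ψ 2)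
        + μ 0 * μ 3 * gg (t - ψ 3)
        + (μ 1 * μ 2 * gg (ψ 1 - ψ 2) + μ 1 * μ 3 * gg (ψ 1 - ψ 3)
          + μ 2 * μ 3 * gg (ψ 2 - ψ 3))))
      (-(μ 0 * μ 1 * gg1 (ψ 0 - ψ 1) + μ 0 * μ 2 * gg1 (ψ 0 - ψ 2)
        + μ 0 * μ 3 * gg1 (ψ 0 - ψ 3))) (ψ 0) := by
    have h0 := ((((dgR (ψ 1) (ψ 0) ha).const_mul (μ 0 * μ 1)).add
      ((dgR (ψ 2) (ψ 0) hb).const_mul (μ 0 * μ 2))).add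
      ((dgR (ψ 3) (ψ 0) hd).const_mul (μ 0 * μ 3))).add_const
      (μ 1 * μ 2 * gg (ψ 1 - ψ 2) + μ 1 * μ 3 * gg (ψ 1 - ψ 3)
        + μ 2 * μ 3 * gg (ψ 2 - ψ 3)) |>.neg
    refine h0.congr_deriv ?_
    try ring
  exact h.deriv

lemma pV1 (μ ψ : Fin 4 → ℝ) (ha : Real.cos (ψ 0 - ψ 1) ≠ 1)
    (hb : Real.cos (ψ 1 - ψ 2) ≠ 1) (hd : Real.cos (ψ 1 - ψ 3) ≠ 1) :
    partialV μ ψ 1 = -(-(μ 0 * μ 1 * gg1 (ψ 0 - ψ 1)) + μ 1 * μ 2 * gg1 (ψ 1 - ψ 2)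
      + μ 1 * μ 3 * gg1 (ψ 1 - ψ 3)) := by
  have hfun : (fun t => V μ (Function.update ψ 1 t)) =
      fun t => -(μ 0 * μ 1 * gg (ψ 0 - t) + μ 1 * μ 2 * gg (t - ψ 2)
        + μ 1 * μ 3 * gg (t - ψ 3)
        + (μ 0 * μ 2 * gg (ψ 0 - ψ 2) + μ 0 * μ 3 * gg (ψ 0 - ψ 3)
          + μ 2 * μ 3 * gg (ψ 2 - ψ 3))) := by
    funext t
    rw [V_expand]
    simp [Function.update_apply]
    try ring
  rw [partialV, hfun]
  have h : HasDerivAt (fun t => -(μ 0 * μ 1 * gg (ψ 0 - t) + μ 1 * μ 2 * gg (t - ψ 2)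
        + μ 1 * μ 3 * gg (t - ψ 3)
        + (μ 0 * μ 2 * gg (ψ 0 - ψ 2) + μ 0 * μ 3 * gg (ψ 0 - ψ 3)
          + μ 2 * μ 3 * gg (ψ 2 - ψ 3))))
      (-(-(μ 0 * μ 1 * gg1 (ψ 0 - ψ 1)) + μ 1 * μ 2 * gg1 (ψ 1 - ψ 2)
        + μ 1 * μ 3 * gg1 (ψ 1 - ψ 3))) (ψ 1) := by
    have h0 := ((((dgL (ψ 0) (ψ 1) ha).const_mul (μ 0 * μ 1)).add
      ((dgR (ψ 2) (ψ 1) hb).const_mul (μ 1 * μ 2))).add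
      ((dgR (ψ 3) (ψ 1) hd).const_mul (μ 1 * μ 3))).add_const
      (μ 0 * μ 2 * gg (ψ 0 - ψ 2) + μ 0 * μ 3 * gg (ψ 0 - ψ 3)
        + μ 2 * μ 3 * gg (ψ 2 - ψ 3)) |>.neg
    refine h0.congr_deriv ?_
    try ring
  exact h.deriv

lemma pV2 (μ ψ : Fin 4 → ℝ) (ha : Real.cos (ψ 0 - ψ 2) ≠ 1)
    (hb : Real.cos (ψ 1 - ψ 2) ≠ 1) (hd : Real.cos (ψ 2 - ψ 3) ≠ 1) :
    partialV μ ψ 2 = -(-(μ 0 * μ 2 * gg1 (ψ 0 - ψ 2)) + -(μ 1 * μ 2 * gg1 (ψ 1 - ψ 2))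
      + μ 2 * μ 3 * gg1 (ψ 2 - ψ 3)) := by
  have hfun : (fun t => V μ (Function.update ψ 2 t)) =
      fun t => -(μ 0 * μ 2 * gg (ψ 0 - t) + μ 1 * μ 2 * gg (ψ 1 - t)
        + μ 2 * μ 3 * gg (t - ψ 3)
        + (μ 0 * μ 1 * gg (ψ 0 - ψ 1) + μ 0 * μ 3 * gg (ψ 0 - ψ 3)
          + μ 1 * μ 3 * gg (ψ 1 - ψ 3))) := by
    funext t
    rw [V_expand]
    simp [Function.update_apply]
    try ring
  rw [partialV, hfun]
  have h : HasDerivAt (fun t => -(μ 0 * μ 2 * gg (ψ 0 - t) + μ 1 * μ 2 * gg (ψ 1 - t)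
        + μ 2 * μ 3 * gg (t - ψ 3)
        + (μ 0 * μ 1 * gg (ψ 0 - ψ 1) + μ 0 * μ 3 * gg (ψ 0 - ψ 3)
          + μ 1 * μ 3 * gg (ψ 1 - ψ 3))))
      (-(-(μ 0 * μ 2 * gg1 (ψ 0 - ψ 2)) + -(μ 1 * μ 2 * gg1 (ψ 1 - ψ 2))
        + μ 2 * μ 3 * gg1 (ψ 2 - ψ 3))) (ψ 2) := by
    have h0 := ((((dgL (ψ 0) (ψ 2) ha).const_mul (μ 0 * μ 2)).add
      ((dgL (ψ 1) (ψ 2) hb).const_mul (μ 1 * μ 2))).add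
      ((dgR (ψ 3) (ψ 2) hd).const_mul (μ 2 * μ 3))).add_const
      (μ 0 * μ 1 * gg (ψ 0 - ψ 1) + μ 0 * μ 3 * gg (ψ 0 - ψ 3)
        + μ 1 * μ 3 * gg (ψ 1 - ψ 3)) |>.neg
    refine h0.congr_deriv ?_
    try ring
  exact h.deriv

lemma pV3 (μ ψ : Fin 4 → ℝ) (ha : Real.cos (ψ 0 - ψ 3) ≠ 1)
    (hb : Real.cos (ψ 1 - ψ 3) ≠ 1) (hd : Real.cos (ψ 2 - ψ 3) ≠ 1) :
    partialV μ ψ 3 = -(-(μ 0 * μ 3 * gg1 (ψ 0 - ψ 3)) + -(μ 1 * μ 3 * gg1 (ψ 1 - ψ 3))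
      + -(μ 2 * μ 3 * gg1 (ψ 2 - ψ 3))) := by
  have hfun : (fun t => V μ (Function.update ψ 3 t)) =
      fun t => -(μ 0 * μ 3 * gg (ψ 0 - t) + μ 1 * μ 3 * gg (ψ 1 - t)
        + μ 2 * μ 3 * gg (ψ 2 - t)
        + (μ 0 * μ 1 * gg (ψ 0 - ψ 1) + μ 0 * μ 2 * gg (ψ 0 - ψ 2)
          + μ 1 * μ 2 * gg (ψ 1 - ψ 2))) := by
    funext t
    rw [V_expand]
    simp [Function.update_apply]
    try ring
  rw [partialV, hfun]
  have h : HasDerivAt (fun t => -(μ 0 * μ 3 * gg (ψ 0 - t) + μ 1 * μ 3 * gg (ψ 1 - t)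
        + μ 2 * μ 3 * gg (ψ 2 - t)
        + (μ 0 * μ 1 * gg (ψ 0 - ψ 1) + μ 0 * μ 2 * gg (ψ 0 - ψ 2)
          + μ 1 * μ 2 * gg (ψ 1 - ψ 2))))
      (-(-(μ 0 * μ 3 * gg1 (ψ 0 - ψ 3)) + -(μ 1 * μ 3 * gg1 (ψ 1 - ψ 3))
        + -(μ 2 * μ 3 * gg1 (ψ 2 - ψ 3)))) (ψ 3) := by
    have h0 := ((((dgL (ψ 0) (ψ 3) ha).const_mul (μ 0 * μ 3)).add
      ((dgL (ψ 1) (ψ 3) hb).const_mul (μ 1 * μ 3))).add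
      ((dgL (ψ 2) (ψ 3) hd).const_mul (μ 2 * μ 3))).add_const
      (μ 0 * μ 1 * gg (ψ 0 - ψ 1) + μ 0 * μ 2 * gg (ψ 0 - ψ 2)
        + μ 1 * μ 2 * gg (ψ 1 - ψ 2)) |>.neg
    refine h0.congr_deriv ?_
    try ring
  exact h.deriv

lemma hc01 : Real.cos ((0:ℝ) - π/2) = 0 := by
  rw [show ((0:ℝ) - π/2) = -(π/2) by ring, Real.cos_neg, Real.cos_pi_div_two]
lemma hc02 : Real.cos ((0:ℝ) - π) = -1 := by
  rw [show ((0:ℝ) - π) = -π by ring, Real.cos_neg, Real.cos_pi]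
lemma hc03 : Real.cos ((0:ℝ) - 3*π/2) = 0 := by
  rw [show ((0:ℝ) - 3*π/2) = -(π + π/2) by ring, Real.cos_neg, Real.cos_add]; simp
lemma hc10 : Real.cos (π/2 - 0) = 0 := by
  rw [show (π/2 - 0 : ℝ) = π/2 by ring, Real.cos_pi_div_two]
lemma hc12 : Real.cos (π/2 - π) = 0 := by
  rw [show (π/2 - π : ℝ) = -(π/2) by ring, Real.cos_neg, Real.cos_pi_div_two]
lemma hc13 : Real.cos (π/2 - 3*π/2) = -1 := by
  rw [show (π/2 - 3*π/2 : ℝ) = -π by ring, Real.cos_neg, Real.cos_pi]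
lemma hc20 : Real.cos (π - 0) = -1 := by
  rw [show (π - 0 : ℝ) = π by ring, Real.cos_pi]
lemma hc21 : Real.cos (π - π/2) = 0 := by
  rw [show (π - π/2 : ℝ) = π/2 by ring, Real.cos_pi_div_two]
lemma hc23 : Real.cos (π - 3*π/2) = 0 := by
  rw [show (π - 3*π/2 : ℝ) = -(π/2) by ring, Real.cos_neg, Real.cos_pi_div_two]
lemma hc30 : Real.cos (3*π/2 - 0) = 0 := by
  rw [show (3*π/2 - 0 : ℝ) = π + π/2 by ring, Real.cos_add]; simp
lemma hc31 : Real.cos (3*π/2 - π/2) = -1 := by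
  rw [show (3*π/2 - π/2 : ℝ) = π by ring, Real.cos_pi]
lemma hc32 : Real.cos (3*π/2 - π) = 0 := by
  rw [show (3*π/2 - π : ℝ) = π/2 by ring, Real.cos_pi_div_two]

lemma gg2_cos0 {x : ℝ} (h : Real.cos x = 0) : gg2 x = -(1/2) := by
  rw [gg2, h]; norm_num
lemma gg2_cosm1 {x : ℝ} (h : Real.cos x = -1) : gg2 x = 3/4 := by
  rw [gg2, h]; norm_num

lemma ev_cos_L (c q : ℝ) (hc : Real.cos (c - q) ≠ 1) :
    ∀ᶠ t in nhds q, Real.cos (c - t) ≠ 1 :=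
  ((Real.continuous_cos.comp (continuous_const.sub continuous_id)).continuousAt).eventually_ne hc

lemma ev_cos_R (c q : ℝ) (hc : Real.cos (q - c) ≠ 1) :
    ∀ᶠ t in nhds q, Real.cos (t - c) ≠ 1 :=
  ((Real.continuous_cos.comp (continuous_id.sub continuous_const)).continuousAt).eventually_ne hc

lemma deriv_off1 (f : ℝ → ℝ) (A B c q : ℝ) (hc : Real.cos (c - q) ≠ 1)
    (hf : ∀ t, Real.cos (c - t) ≠ 1 → f t = -(A * gg1 (c - t) + B)) :
    deriv f q = A * gg2 (c - q) := by
  have heq : f =ᶠ[nhds q] fun t => -(A * gg1 (c - t) + B) := (ev_cos_L c q hc).mono hf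
  rw [heq.deriv_eq]
  exact ((((dg1L c q hc).const_mul A).add_const B).neg).deriv.trans (by ring)

lemma deriv_off2 (f : ℝ → ℝ) (A B c q : ℝ) (hc : Real.cos (q - c) ≠ 1)
    (hf : ∀ t, Real.cos (t - c) ≠ 1 → f t = -(-(A * gg1 (t - c)) + B)) :
    deriv f q = A * gg2 (q - c) := by
  have heq : f =ᶠ[nhds q] fun t => -(-(A * gg1 (t - c)) + B) := (ev_cos_R c q hc).mono hf
  rw [heq.deriv_eq]
  exact ((((dg1R c q hc).const_mul A).neg.add_const B).neg).deriv.trans (by ring)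

lemma deriv_D0 (f : ℝ → ℝ) (A1 A2 A3 c1 c2 c3 q : ℝ)
    (h1 : Real.cos (q - c1) ≠ 1) (h2 : Real.cos (q - c2) ≠ 1) (h3 : Real.cos (q - c3) ≠ 1)
    (hf : ∀ t, Real.cos (t - c1) ≠ 1 → Real.cos (t - c2) ≠ 1 → Real.cos (t - c3) ≠ 1 →
      f t = -(A1 * gg1 (t - c1) + A2 * gg1 (t - c2) + A3 * gg1 (t - c3))) :
    deriv f q = -(A1 * gg2 (q - c1) + A2 * gg2 (q - c2) + A3 * gg2 (q - c3)) := by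
  have heq : f =ᶠ[nhds q]
      fun t => -(A1 * gg1 (t - c1) + A2 * gg1 (t - c2) + A3 * gg1 (t - c3)) :=
    ((ev_cos_R c1 q h1).and ((ev_cos_R c2 q h2).and (ev_cos_R c3 q h3))).mono
      (fun t ht => hf t ht.1 ht.2.1 ht.2.2)
  rw [heq.deriv_eq]
  exact ((((dg1R c1 q h1).const_mul A1).add ((dg1R c2 q h2).const_mul A2)).add
    ((dg1R c3 q h3).const_mul A3)).neg.deriv.trans (by ring)

lemma deriv_D1 (f : ℝ → ℝ) (A1 A2 A3 c1 c2 c3 q : ℝ)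
    (h1 : Real.cos (c1 - q) ≠ 1) (h2 : Real.cos (q - c2) ≠ 1) (h3 : Real.cos (q - c3) ≠ 1)
    (hf : ∀ t, Real.cos (c1 - t) ≠ 1 → Real.cos (t - c2) ≠ 1 → Real.cos (t - c3) ≠ 1 →
      f t = -(-(A1 * gg1 (c1 - t)) + A2 * gg1 (t - c2) + A3 * gg1 (t - c3))) :
    deriv f q = -(A1 * gg2 (c1 - q) + A2 * gg2 (q - c2) + A3 * gg2 (q - c3)) := by
  have heq : f =ᶠ[nhds q]
      fun t => -(-(A1 * gg1 (c1 - t)) + A2 * gg1 (t - c2) + A3 * gg1 (t - c3)) :=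
    ((ev_cos_L c1 q h1).and ((ev_cos_R c2 q h2).and (ev_cos_R c3 q h3))).mono
      (fun t ht => hf t ht.1 ht.2.1 ht.2.2)
  rw [heq.deriv_eq]
  exact ((((dg1L c1 q h1).const_mul A1).neg.add ((dg1R c2 q h2).const_mul A2)).add
    ((dg1R c3 q h3).const_mul A3)).neg.deriv.trans (by ring)

lemma deriv_D2 (f : ℝ → ℝ) (A1 A2 A3 c1 c2 c3 q : ℝ)
    (h1 : Real.cos (c1 - q) ≠ 1) (h2 : Real.cos (c2 - q) ≠ 1) (h3 : Real.cos (q - c3) ≠ 1)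
    (hf : ∀ t, Real.cos (c1 - t) ≠ 1 → Real.cos (c2 - t) ≠ 1 → Real.cos (t - c3) ≠ 1 →
      f t = -(-(A1 * gg1 (c1 - t)) + -(A2 * gg1 (c2 - t)) + A3 * gg1 (t - c3))) :
    deriv f q = -(A1 * gg2 (c1 - q) + A2 * gg2 (c2 - q) + A3 * gg2 (q - c3)) := by
  have heq : f =ᶠ[nhds q]
      fun t => -(-(A1 * gg1 (c1 - t)) + -(A2 * gg1 (c2 - t)) + A3 * gg1 (t - c3)) :=
    ((ev_cos_L c1 q h1).and ((ev_cos_L c2 q h2).and (ev_cos_R c3 q h3))).mono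
      (fun t ht => hf t ht.1 ht.2.1 ht.2.2)
  rw [heq.deriv_eq]
  exact ((((dg1L c1 q h1).const_mul A1).neg.add ((dg1L c2 q h2).const_mul A2).neg).add
    ((dg1R c3 q h3).const_mul A3)).neg.deriv.trans (by ring)

lemma deriv_D3 (f : ℝ → ℝ) (A1 A2 A3 c1 c2 c3 q : ℝ)
    (h1 : Real.cos (c1 - q) ≠ 1) (h2 : Real.cos (c2 - q) ≠ 1) (h3 : Real.cos (c3 - q) ≠ 1)
    (hf : ∀ t, Real.cos (c1 - t) ≠ 1 → Real.cos (c2 - t) ≠ 1 → Real.cos (c3 - t) ≠ 1 →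
      f t = -(-(A1 * gg1 (c1 - t)) + -(A2 * gg1 (c2 - t)) + -(A3 * gg1 (c3 - t)))) :
    deriv f q = -(A1 * gg2 (c1 - q) + A2 * gg2 (c2 - q) + A3 * gg2 (c3 - q)) := by
  have heq : f =ᶠ[nhds q]
      fun t => -(-(A1 * gg1 (c1 - t)) + -(A2 * gg1 (c2 - t)) + -(A3 * gg1 (c3 - t))) :=
    ((ev_cos_L c1 q h1).and ((ev_cos_L c2 q h2).and (ev_cos_L c3 q h3))).mono
      (fun t ht => hf t ht.1 ht.2.1 ht.2.2)
  rw [heq.deriv_eq]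
  exact ((((dg1L c1 q h1).const_mul A1).neg.add ((dg1L c2 q h2).const_mul A2).neg).add
    ((dg1L c3 q h3).const_mul A3).neg).neg.deriv.trans (by ring)

lemma hess_eq (a b : ℝ) : hessV ![a,b,a,b] ![(0:ℝ), π/2, π, 3*π/2] =
    !![a*b - 3*a^2/4, -(a*b)/2, 3*a^2/4, -(a*b)/2;
       -(a*b)/2, a*b - 3*b^2/4, -(a*b)/2, 3*b^2/4;
       3*a^2/4, -(a*b)/2, a*b - 3*a^2/4, -(a*b)/2;
       -(a*b)/2, 3*b^2/4, -(a*b)/2, a*b - 3*b^2/4] := by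
  ext k l
  fin_cases k <;> fin_cases l
  · show deriv (fun t => partialV ![a,b,a,b] (Function.update (![(0:ℝ), π/2, π, 3*π/2] : Fin 4 → ℝ) 0 t) 0) ((0:ℝ)) = a*b - 3*a^2/4
    rw [deriv_D0 _ (a*b) (a*a) (a*b) (π/2) (π) (3*π/2) ((0:ℝ))
        (by rw [hc01]; norm_num) (by rw [hc02]; norm_num) (by rw [hc03]; norm_num)
        (fun t hyp1 hyp2 hyp3 => by
          rw [pV0 ![a,b,a,b] _ (by show Real.cos (t - π/2) ≠ 1; exact hyp1) (by show Real.cos (t - π) ≠ 1; exact hyp2) (by show Real.cos (t - 3*π/2) ≠ 1; exact hyp3)]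
          simp [Function.update_apply]
          try ring),
      gg2_cos0 hc01, gg2_cosm1 hc02, gg2_cos0 hc03]
    ring
  · show deriv (fun t => partialV ![a,b,a,b] (Function.update (![(0:ℝ), π/2, π, 3*π/2] : Fin 4 → ℝ) 0 t) 1) ((0:ℝ)) = -(a*b)/2
    rw [deriv_off2 _ (a*b) (b*a*gg1 (π/2 - π) + b*b*gg1 (π/2 - 3*π/2)) (π/2) ((0:ℝ))
        (by rw [hc01]; norm_num)
        (fun t ht => by
          rw [pV1 ![a,b,a,b] _ (by show Real.cos (t - π/2) ≠ 1; exact ht) (by show Real.cos (π/2 - π) ≠ 1; rw [hc12]; norm_num) (by show Real.cos (π/2 - 3*π/2) ≠ 1; rw [hc13]; norm_num)]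
          simp [Function.update_apply]
          try ring),
      gg2_cos0 hc01]
    ring
  · show deriv (fun t => partialV ![a,b,a,b] (Function.update (![(0:ℝ), π/2, π, 3*π/2] : Fin 4 → ℝ) 0 t) 2) ((0:ℝ)) = 3*a^2/4
    rw [deriv_off2 _ (a*a) (-(b*a*gg1 (π/2 - π)) + a*b*gg1 (π - 3*π/2)) (π) ((0:ℝ))
        (by rw [hc02]; norm_num)
        (fun t ht => by
          rw [pV2 ![a,b,a,b] _ (by show Real.cos (t - π) ≠ 1; exact ht) (by show Real.cos (π/2 - π) ≠ 1; rw [hc12]; norm_num) (by show Real.cos (π - 3*π/2) ≠ 1; rw [hc23]; norm_num)]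
          simp [Function.update_apply]
          try ring),
      gg2_cosm1 hc02]
    ring
  · show deriv (fun t => partialV ![a,b,a,b] (Function.update (![(0:ℝ), π/2, π, 3*π/2] : Fin 4 → ℝ) 0 t) 3) ((0:ℝ)) = -(a*b)/2
    rw [deriv_off2 _ (a*b) (-(b*b*gg1 (π/2 - 3*π/2)) + -(a*b*gg1 (π - 3*π/2))) (3*π/2) ((0:ℝ))
        (by rw [hc03]; norm_num)
        (fun t ht => by
          rw [pV3 ![a,b,a,b] _ (by show Real.cos (t - 3*π/2) ≠ 1; exact ht) (by show Real.cos (π/2 - 3*π/2) ≠ 1; rw [hc13]; norm_num) (by show Real.cos (π - 3*π/2) ≠ 1; rw [hc23]; norm_num)]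
          simp [Function.update_apply]
          try ring),
      gg2_cos0 hc03]
    ring
  · show deriv (fun t => partialV ![a,b,a,b] (Function.update (![(0:ℝ), π/2, π, 3*π/2] : Fin 4 → ℝ) 1 t) 0) (π/2) = -(a*b)/2
    rw [deriv_off1 _ (a*b) (a*a*gg1 ((0:ℝ) - π) + a*b*gg1 ((0:ℝ) - 3*π/2)) ((0:ℝ)) (π/2)
        (by rw [hc01]; norm_num)
        (fun t ht => by
          rw [pV0 ![a,b,a,b] _ (by show Real.cos ((0:ℝ) - t) ≠ 1; exact ht) (by show Real.cos ((0:ℝ) - π) ≠ 1; rw [hc02]; norm_num) (by show Real.cos ((0:ℝ) - 3*π/2) ≠ 1; rw [hc03]; norm_num)]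
          simp [Function.update_apply]
          try ring),
      gg2_cos0 hc01]
    ring
  · show deriv (fun t => partialV ![a,b,a,b] (Function.update (![(0:ℝ), π/2, π, 3*π/2] : Fin 4 → ℝ) 1 t) 1) (π/2) = a*b - 3*b^2/4
    rw [deriv_D1 _ (a*b) (b*a) (b*b) ((0:ℝ)) (π) (3*π/2) (π/2)
        (by rw [hc01]; norm_num) (by rw [hc12]; norm_num) (by rw [hc13]; norm_num)
        (fun t hyp1 hyp2 hyp3 => by
          rw [pV1 ![a,b,a,b] _ (by show Real.cos ((0:ℝ) - t) ≠ 1; exact hyp1) (by show Real.cos (t - π) ≠ 1; exact hyp2) (by show Real.cos (t - 3*π/2) ≠ 1; exact hyp3)]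
          simp [Function.update_apply]
          try ring),
      gg2_cos0 hc01, gg2_cos0 hc12, gg2_cosm1 hc13]
    ring
  · show deriv (fun t => partialV ![a,b,a,b] (Function.update (![(0:ℝ), π/2, π, 3*π/2] : Fin 4 → ℝ) 1 t) 2) (π/2) = -(a*b)/2
    rw [deriv_off2 _ (b*a) (-(a*a*gg1 ((0:ℝ) - π)) + a*b*gg1 (π - 3*π/2)) (π) (π/2)
        (by rw [hc12]; norm_num)
        (fun t ht => by
          rw [pV2 ![a,b,a,b] _ (by show Real.cos ((0:ℝ) - π) ≠ 1; rw [hc02]; norm_num) (by show Real.cos (t - π) ≠ 1; exact ht) (by show Real.cos (π - 3*π/2) ≠ 1; rw [hc23]; norm_num)]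
          simp [Function.update_apply]
          try ring),
      gg2_cos0 hc12]
    ring
  · show deriv (fun t => partialV ![a,b,a,b] (Function.update (![(0:ℝ), π/2, π, 3*π/2] : Fin 4 → ℝ) 1 t) 3) (π/2) = 3*b^2/4
    rw [deriv_off2 _ (b*b) (-(a*b*gg1 ((0:ℝ) - 3*π/2)) + -(a*b*gg1 (π - 3*π/2))) (3*π/2) (π/2)
        (by rw [hc13]; norm_num)
        (fun t ht => by
          rw [pV3 ![a,b,a,b] _ (by show Real.cos ((0:ℝ) - 3*π/2) ≠ 1; rw [hc03]; norm_num) (by show Real.cos (t - 3*π/2) ≠ 1; exact ht) (by show Real.cos (π - 3*π/2) ≠ 1; rw [hc23]; norm_num)]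
          simp [Function.update_apply]
          try ring),
      gg2_cosm1 hc13]
    ring
  · show deriv (fun t => partialV ![a,b,a,b] (Function.update (![(0:ℝ), π/2, π, 3*π/2] : Fin 4 → ℝ) 2 t) 0) (π) = 3*a^2/4
    rw [deriv_off1 _ (a*a) (a*b*gg1 ((0:ℝ) - π/2) + a*b*gg1 ((0:ℝ) - 3*π/2)) ((0:ℝ)) (π)
        (by rw [hc02]; norm_num)
        (fun t ht => by
          rw [pV0 ![a,b,a,b] _ (by show Real.cos ((0:ℝ) - π/2) ≠ 1; rw [hc01]; norm_num) (by show Real.cos ((0:ℝ) - t) ≠ 1; exact ht) (by show Real.cos ((0:ℝ) - 3*π/2) ≠ 1; rw [hc03]; norm_num)]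
          simp [Function.update_apply]
          try ring),
      gg2_cosm1 hc02]
    ring
  · show deriv (fun t => partialV ![a,b,a,b] (Function.update (![(0:ℝ), π/2, π, 3*π/2] : Fin 4 → ℝ) 2 t) 1) (π) = -(a*b)/2
    rw [deriv_off1 _ (b*a) (-(a*b*gg1 ((0:ℝ) - π/2)) + b*b*gg1 (π/2 - 3*π/2)) (π/2) (π)
        (by rw [hc12]; norm_num)
        (fun t ht => by
          rw [pV1 ![a,b,a,b] _ (by show Real.cos ((0:ℝ) - π/2) ≠ 1; rw [hc01]; norm_num) (by show Real.cos (π/2 - t) ≠ 1; exact ht) (by show Real.cos (π/2 - 3*π/2) ≠ 1; rw [hc13]; norm_num)]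
          simp [Function.update_apply]
          try ring),
      gg2_cos0 hc12]
    ring
  · show deriv (fun t => partialV ![a,b,a,b] (Function.update (![(0:ℝ), π/2, π, 3*π/2] : Fin 4 → ℝ) 2 t) 2) (π) = a*b - 3*a^2/4
    rw [deriv_D2 _ (a*a) (b*a) (a*b) ((0:ℝ)) (π/2) (3*π/2) (π)
        (by rw [hc02]; norm_num) (by rw [hc12]; norm_num) (by rw [hc23]; norm_num)
        (fun t hyp1 hyp2 hyp3 => by
          rw [pV2 ![a,b,a,b] _ (by show Real.cos ((0:ℝ) - t) ≠ 1; exact hyp1) (by show Real.cos (π/2 - t) ≠ 1; exact hyp2) (by show Real.cos (t - 3*π/2) ≠ 1; exact hyp3)]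
          simp [Function.update_apply]
          try ring),
      gg2_cosm1 hc02, gg2_cos0 hc12, gg2_cos0 hc23]
    ring
  · show deriv (fun t => partialV ![a,b,a,b] (Function.update (![(0:ℝ), π/2, π, 3*π/2] : Fin 4 → ℝ) 2 t) 3) (π) = -(a*b)/2
    rw [deriv_off2 _ (a*b) (-(a*b*gg1 ((0:ℝ) - 3*π/2)) + -(b*b*gg1 (π/2 - 3*π/2))) (3*π/2) (π)
        (by rw [hc23]; norm_num)
        (fun t ht => by
          rw [pV3 ![a,b,a,b] _ (by show Real.cos ((0:ℝ) - 3*π/2) ≠ 1; rw [hc03]; norm_num) (by show Real.cos (π/2 - 3*π/2) ≠ 1; rw [hc13]; norm_num) (by show Real.cos (t - 3*π/2) ≠ 1; exact ht)]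
          simp [Function.update_apply]
          try ring),
      gg2_cos0 hc23]
    ring
  · show deriv (fun t => partialV ![a,b,a,b] (Function.update (![(0:ℝ), π/2, π, 3*π/2] : Fin 4 → ℝ) 3 t) 0) (3*π/2) = -(a*b)/2
    rw [deriv_off1 _ (a*b) (a*b*gg1 ((0:ℝ) - π/2) + a*a*gg1 ((0:ℝ) - π)) ((0:ℝ)) (3*π/2)
        (by rw [hc03]; norm_num)
        (fun t ht => by
          rw [pV0 ![a,b,a,b] _ (by show Real.cos ((0:ℝ) - π/2) ≠ 1; rw [hc01]; norm_num) (by show Real.cos ((0:ℝ) - π) ≠ 1; rw [hc02]; norm_num) (by show Real.cos ((0:ℝ) - t) ≠ 1; exact ht)]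
          simp [Function.update_apply]
          try ring),
      gg2_cos0 hc03]
    ring
  · show deriv (fun t => partialV ![a,b,a,b] (Function.update (![(0:ℝ), π/2, π, 3*π/2] : Fin 4 → ℝ) 3 t) 1) (3*π/2) = 3*b^2/4
    rw [deriv_off1 _ (b*b) (-(a*b*gg1 ((0:ℝ) - π/2)) + b*a*gg1 (π/2 - π)) (π/2) (3*π/2)
        (by rw [hc13]; norm_num)
        (fun t ht => by
          rw [pV1 ![a,b,a,b] _ (by show Real.cos ((0:ℝ) - π/2) ≠ 1; rw [hc01]; norm_num) (by show Real.cos (π/2 - π) ≠ 1; rw [hc12]; norm_num) (by show Real.cos (π/2 - t) ≠ 1; exact ht)]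
          simp [Function.update_apply]
          try ring),
      gg2_cosm1 hc13]
    ring
  · show deriv (fun t => partialV ![a,b,a,b] (Function.update (![(0:ℝ), π/2, π, 3*π/2] : Fin 4 → ℝ) 3 t) 2) (3*π/2) = -(a*b)/2
    rw [deriv_off1 _ (a*b) (-(a*a*gg1 ((0:ℝ) - π)) + -(b*a*gg1 (π/2 - π))) (π) (3*π/2)
        (by rw [hc23]; norm_num)
        (fun t ht => by
          rw [pV2 ![a,b,a,b] _ (by show Real.cos ((0:ℝ) - π) ≠ 1; rw [hc02]; norm_num) (by show Real.cos (π/2 - π) ≠ 1; rw [hc12]; norm_num) (by show Real.cos (π - t) ≠ 1; exact ht)]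
          simp [Function.update_apply]
          try ring),
      gg2_cos0 hc23]
    ring
  · show deriv (fun t => partialV ![a,b,a,b] (Function.update (![(0:ℝ), π/2, π, 3*π/2] : Fin 4 → ℝ) 3 t) 3) (3*π/2) = a*b - 3*b^2/4
    rw [deriv_D3 _ (a*b) (b*b) (a*b) ((0:ℝ)) (π/2) (π) (3*π/2)
        (by rw [hc03]; norm_num) (by rw [hc13]; norm_num) (by rw [hc23]; norm_num)
        (fun t hyp1 hyp2 hyp3 => by
          rw [pV3 ![a,b,a,b] _ (by show Real.cos ((0:ℝ) - t) ≠ 1; exact hyp1) (by show Real.cos (π/2 - t) ≠ 1; exact hyp2) (by show Real.cos (π - t) ≠ 1; exact hyp3)]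
          simp [Function.update_apply]
          try ring),
      gg2_cos0 hc03, gg2_cosm1 hc13, gg2_cos0 hc23]
    ring

set_option maxHeartbeats 1600000 in
/-- Characteristic polynomial of the weighted Hessian at the (1+4)-gon with
`mu3 = mu1`, `mu4 = mu2`. -/
theorem square_weighted_hessian_charpoly (μ1 μ2 : ℝ) (h1 : μ1 ≠ 0) (h2 : μ2 ≠ 0) :
    ((Matrix.diagonal ![μ1, μ2, μ1, μ2])⁻¹ *
        hessV ![μ1, μ2, μ1, μ2] ![0, π / 2, π, 3 * π / 2]).charpoly =
      X * (X - C ((2 * μ1 - 3 * μ2) / 2)) * (X - C ((-3 * μ1 + 2 * μ2) / 2)) *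
        (X - C (μ1 + μ2)) := by
  have hM : hessV ![μ1, μ2, μ1, μ2] ![0, π / 2, π, 3 * π / 2] =
      !![μ1*μ2 - 3*μ1^2/4, -(μ1*μ2)/2, 3*μ1^2/4, -(μ1*μ2)/2;
         -(μ1*μ2)/2, μ1*μ2 - 3*μ2^2/4, -(μ1*μ2)/2, 3*μ2^2/4;
         3*μ1^2/4, -(μ1*μ2)/2, μ1*μ2 - 3*μ1^2/4, -(μ1*μ2)/2;
         -(μ1*μ2)/2, 3*μ2^2/4, -(μ1*μ2)/2, μ1*μ2 - 3*μ2^2/4] := hess_eq μ1 μ2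
  have hinv : (Matrix.diagonal ![μ1, μ2, μ1, μ2])⁻¹ =
      Matrix.diagonal ![μ1⁻¹, μ2⁻¹, μ1⁻¹, μ2⁻¹] := by
    apply Matrix.inv_eq_right_inv
    rw [Matrix.diagonal_mul_diagonal]
    ext i j
    fin_cases i <;> fin_cases j <;>
      simp [Matrix.diagonal, Matrix.one_apply, h1, h2]
  rw [hM, hinv]
  have hprod : Matrix.diagonal ![μ1⁻¹, μ2⁻¹, μ1⁻¹, μ2⁻¹] *
      !![μ1*μ2 - 3*μ1^2/4, -(μ1*μ2)/2, 3*μ1^2/4, -(μ1*μ2)/2;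
         -(μ1*μ2)/2, μ1*μ2 - 3*μ2^2/4, -(μ1*μ2)/2, 3*μ2^2/4;
         3*μ1^2/4, -(μ1*μ2)/2, μ1*μ2 - 3*μ1^2/4, -(μ1*μ2)/2;
         -(μ1*μ2)/2, 3*μ2^2/4, -(μ1*μ2)/2, μ1*μ2 - 3*μ2^2/4] =
      !![μ2 - 3*μ1/4, -(μ2/2), 3*μ1/4, -(μ2/2);
         -(μ1/2), μ1 - 3*μ2/4, -(μ1/2), 3*μ2/4;
         3*μ1/4, -(μ2/2), μ2 - 3*μ1/4, -(μ2/2);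
         -(μ1/2), 3*μ2/4, -(μ1/2), μ1 - 3*μ2/4] := by
    ext i j
    rw [Matrix.diagonal_mul]
    fin_cases i <;> fin_cases j <;> (simp <;> field_simp <;> ring)
  rw [hprod]
  show (Matrix.charmatrix _).det = _
  have hcm : Matrix.charmatrix
      !![μ2 - 3*μ1/4, -(μ2/2), 3*μ1/4, -(μ2/2);
         -(μ1/2), μ1 - 3*μ2/4, -(μ1/2), 3*μ2/4;
         3*μ1/4, -(μ2/2), μ2 - 3*μ1/4, -(μ2/2);
         -(μ1/2), 3*μ2/4, -(μ1/2), μ1 - 3*μ2/4] =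
      !![X - C (μ2 - 3*μ1/4), -C (-(μ2/2)), -C (3*μ1/4), -C (-(μ2/2));
         -C (-(μ1/2)), X - C (μ1 - 3*μ2/4), -C (-(μ1/2)), -C (3*μ2/4);
         -C (3*μ1/4), -C (-(μ2/2)), X - C (μ2 - 3*μ1/4), -C (-(μ2/2));
         -C (-(μ1/2)), -C (3*μ2/4), -C (-(μ1/2)), X - C (μ1 - 3*μ2/4)] := by
    ext i j
    fin_cases i <;> fin_cases j <;>
      first
        | (rw [Matrix.charmatrix_apply_eq]; norm_num)
        | (rw [Matrix.charmatrix_apply_ne _ _ _ (by decide)]; norm_num)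
  rw [hcm]
  rw [Matrix.det_succ_row_zero]
  simp [Fin.sum_univ_succ, Matrix.det_fin_three, Fin.succAbove, Fin.ext_iff,
    show ((Fin.castSucc 2 : Fin 4)) = (2:Fin 4) from rfl]
  apply Polynomial.funext
  intro r
  simp
  ring
end

section
/- Let μ1, μ2, μ3, μ4 be nonzero real numbers and let θ2 ∈ (0, 2π) with θ2 ≠ π. If (0, θ2, π, −θ2) is a critical point of V, then μ2 = μ4. (In other words, in any kite configuration the two vortices not on the axis of symmetry must have equal circulation parameters.) -/
open Real Polynomial

noncomputable def Fh (x : ℝ) : ℝ := Real.cos x + (1/2) * Real.log (2 - 2 * Real.cos x)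
noncomputable def Gh (x : ℝ) : ℝ := -Real.sin x + Real.sin x / (2 - 2 * Real.cos x)

lemma V_eq (μ θ : Fin 4 → ℝ) : V μ θ =
    -(μ 0 * μ 1 * Fh (θ 0 - θ 1) + μ 0 * μ 2 * Fh (θ 0 - θ 2) + μ 0 * μ 3 * Fh (θ 0 - θ 3)
      + μ 1 * μ 2 * Fh (θ 1 - θ 2) + μ 1 * μ 3 * Fh (θ 1 - θ 3) + μ 2 * μ 3 * Fh (θ 2 - θ 3)) := by
  unfold V Fh
  have h : ∀ (f : Fin 4 → Fin 4 → ℝ), (∑ i : Fin 4, ∑ j ∈ Finset.Ioi i, f i j)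
      = ∑ i : Fin 4, ∑ j : Fin 4, if i < j then f i j else 0 := by
    intro f
    refine Finset.sum_congr rfl fun i _ => ?_
    rw [show Finset.Ioi i = Finset.univ.filter (i < ·) from by ext; simp, Finset.sum_filter]
  rw [h]
  simp [Fin.sum_univ_four]
  norm_num [Fin.lt_def]
  ring

lemma hasDerivAt_Fh (c a : ℝ) (h : Real.cos (a - c) ≠ 1) :
    HasDerivAt (fun t => Fh (t - c)) (Gh (a - c)) a := by
  have hpos : 2 - 2 * Real.cos (a - c) ≠ 0 := by
    have := Real.cos_le_one (a - c); intro hc; apply h; linarith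
  have hid : HasDerivAt (fun t : ℝ => t - c) 1 a := (hasDerivAt_id a).sub_const c
  have hcos : HasDerivAt (fun t => Real.cos (t - c)) (-Real.sin (a - c) * 1) a :=
    by have := (Real.hasDerivAt_cos (a - c)).comp a hid; exact this
  have hinner : HasDerivAt (fun t => 2 - 2 * Real.cos (t - c))
      (0 - 2 * (-Real.sin (a - c) * 1)) a :=
    (hasDerivAt_const a 2).sub (hcos.const_mul 2)
  have hlog : HasDerivAt (fun t => Real.log (2 - 2 * Real.cos (t - c)))
      ((0 - 2 * (-Real.sin (a - c) * 1)) / (2 - 2 * Real.cos (a - c))) a := hinner.log hpos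
  have := hcos.add (hlog.const_mul (1/2 : ℝ))
  refine HasDerivAt.congr_deriv (f := fun t => Fh (t - c)) this ?_
  unfold Gh
  field_simp
  ring

lemma Fh_neg (x : ℝ) : Fh (-x) = Fh x := by simp [Fh]

lemma update0 (a b c d t : ℝ) : Function.update ![a,b,c,d] (0:Fin 4) t = ![t,b,c,d] := by
  funext i; fin_cases i <;> simp [Function.update]

lemma update2 (a b c d t : ℝ) : Function.update ![a,b,c,d] (2:Fin 4) t = ![a,b,t,d] := by
  funext i; fin_cases i <;> simp [Function.update]

/-- Kites: if `(0, theta2, pi, -theta2)` is a critical point of `V`, then the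
two vortices off the axis of symmetry have equal circulation: `mu2 = mu4`. -/
theorem kite_equal_circulations (μ1 μ2 μ3 μ4 θ2 : ℝ)
    (h1 : μ1 ≠ 0) (h2 : μ2 ≠ 0) (h3 : μ3 ≠ 0) (h4 : μ4 ≠ 0)
    (hθ : θ2 ∈ Set.Ioo (0 : ℝ) (2 * π)) (hθπ : θ2 ≠ π)
    (hcrit : IsCriticalPt ![μ1, μ2, μ3, μ4] ![0, θ2, π, -θ2]) :
    μ2 = μ4 := by
  obtain ⟨hθ0, hθ2π⟩ := hθ
  have hsin : Real.sin θ2 ≠ 0 := by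
    rcases lt_trichotomy θ2 π with h | h | h
    · exact ne_of_gt (Real.sin_pos_of_pos_of_lt_pi hθ0 h)
    · exact absurd h hθπ
    · have hpos : 0 < Real.sin (θ2 - π) :=
        Real.sin_pos_of_pos_of_lt_pi (by linarith) (by linarith)
      rw [Real.sin_sub_pi] at hpos
      intro hz; rw [hz] at hpos; simp at hpos
  have hcos1 : Real.cos θ2 ≠ 1 := by
    intro h; apply hsin
    have := Real.sin_sq_add_cos_sq θ2
    nlinarith
  have hcosm1 : Real.cos θ2 ≠ -1 := by
    intro h; apply hsin
    have := Real.sin_sq_add_cos_sq θ2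
    nlinarith
  -- update rewrites
  have hupd0 : ∀ t, V ![μ1, μ2, μ3, μ4] (Function.update ![0, θ2, π, -θ2] 0 t)
      = -(μ1*μ2*Fh (t - θ2) + μ1*μ3*Fh (t - π) + μ1*μ4*Fh (t - -θ2)
          + (μ2*μ3*Fh (θ2 - π) + μ2*μ4*Fh (θ2 - -θ2) + μ3*μ4*Fh (π - -θ2))) := by
    intro t
    rw [update0, V_eq]
    norm_num [Matrix.cons_val_two, Matrix.cons_val_three]
    ring
  have hupd2 : ∀ t, V ![μ1, μ2, μ3, μ4] (Function.update ![0, θ2, π, -θ2] 2 t)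
      = -(μ1*μ3*Fh (t - 0) + μ2*μ3*Fh (t - θ2) + μ3*μ4*Fh (t - -θ2)
          + (μ1*μ2*Fh (0 - θ2) + μ1*μ4*Fh (0 - -θ2) + μ2*μ4*Fh (θ2 - -θ2))) := by
    intro t
    rw [update2, V_eq]
    rw [show (![0, θ2, t, -θ2] : Fin 4 → ℝ) 0 - (![0, θ2, t, -θ2] : Fin 4 → ℝ) 2
          = -(t - 0) from by norm_num [Matrix.cons_val_two, Matrix.cons_val_three], Fh_neg,
        show (![0, θ2, t, -θ2] : Fin 4 → ℝ) 1 - (![0, θ2, t, -θ2] : Fin 4 → ℝ) 2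
          = -(t - θ2) from by norm_num [Matrix.cons_val_two, Matrix.cons_val_three], Fh_neg]
    norm_num [Matrix.cons_val_two, Matrix.cons_val_three]
    ring
  -- derivatives
  have hA : Real.cos ((0:ℝ) - θ2) ≠ 1 := by rw [zero_sub, Real.cos_neg]; exact hcos1
  have hB : Real.cos ((0:ℝ) - π) ≠ 1 := by rw [zero_sub, Real.cos_neg, Real.cos_pi]; norm_num
  have hC : Real.cos ((0:ℝ) - -θ2) ≠ 1 := by rw [zero_sub, neg_neg]; exact hcos1
  have hD : Real.cos (π - 0) ≠ 1 := by rw [sub_zero, Real.cos_pi]; norm_num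
  have hE : Real.cos (π - θ2) ≠ 1 := by
    rw [Real.cos_pi_sub]; intro h; exact hcosm1 (by linarith)
  have hF : Real.cos (π - -θ2) ≠ 1 := by
    rw [sub_neg_eq_add, Real.cos_add, Real.cos_pi, Real.sin_pi]
    intro h; exact hcosm1 (by nlinarith)
  have hd0 : HasDerivAt (fun t => -(μ1*μ2*Fh (t - θ2) + μ1*μ3*Fh (t - π) + μ1*μ4*Fh (t - -θ2)
          + (μ2*μ3*Fh (θ2 - π) + μ2*μ4*Fh (θ2 - -θ2) + μ3*μ4*Fh (π - -θ2))))
      (-(μ1*μ2*Gh ((0:ℝ) - θ2) + μ1*μ3*Gh ((0:ℝ) - π) + μ1*μ4*Gh ((0:ℝ) - -θ2))) 0 := by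
    have h := ((((hasDerivAt_Fh θ2 0 hA).const_mul (μ1*μ2)).add
        ((hasDerivAt_Fh π 0 hB).const_mul (μ1*μ3))).add
        ((hasDerivAt_Fh (-θ2) 0 hC).const_mul (μ1*μ4))).add_const
        (μ2*μ3*Fh (θ2 - π) + μ2*μ4*Fh (θ2 - -θ2) + μ3*μ4*Fh (π - -θ2)) |>.neg
    exact h
  have hd2 : HasDerivAt (fun t => -(μ1*μ3*Fh (t - 0) + μ2*μ3*Fh (t - θ2) + μ3*μ4*Fh (t - -θ2)
          + (μ1*μ2*Fh (0 - θ2) + μ1*μ4*Fh (0 - -θ2) + μ2*μ4*Fh (θ2 - -θ2))))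
      (-(μ1*μ3*Gh (π - 0) + μ2*μ3*Gh (π - θ2) + μ3*μ4*Gh (π - -θ2))) π := by
    have h := ((((hasDerivAt_Fh 0 π hD).const_mul (μ1*μ3)).add
        ((hasDerivAt_Fh θ2 π hE).const_mul (μ2*μ3))).add
        ((hasDerivAt_Fh (-θ2) π hF).const_mul (μ3*μ4))).add_const
        (μ1*μ2*Fh (0 - θ2) + μ1*μ4*Fh (0 - -θ2) + μ2*μ4*Fh (θ2 - -θ2)) |>.neg
    exact h
  have e1 : -(μ1*μ2*Gh ((0:ℝ) - θ2) + μ1*μ3*Gh ((0:ℝ) - π) + μ1*μ4*Gh ((0:ℝ) - -θ2)) = 0 := by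
    have h0 := hcrit 0
    unfold partialV at h0
    rw [show (![0, θ2, π, -θ2] : Fin 4 → ℝ) 0 = 0 from rfl, funext hupd0, hd0.deriv] at h0
    exact h0
  have e2 : -(μ1*μ3*Gh (π - 0) + μ2*μ3*Gh (π - θ2) + μ3*μ4*Gh (π - -θ2)) = 0 := by
    have h0 := hcrit 2
    unfold partialV at h0
    rw [show (![0, θ2, π, -θ2] : Fin 4 → ℝ) 2 = π from rfl, funext hupd2, hd2.deriv] at h0
    exact h0
  -- simplify trig
  have hden1 : (2 - 2*Real.cos θ2) ≠ 0 := by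
    intro h; exact hcos1 (by linarith)
  have hden2 : (2 + 2*Real.cos θ2) ≠ 0 := by
    intro h; exact hcosm1 (by linarith)
  simp only [Gh, zero_sub, sub_zero, sub_neg_eq_add, neg_neg, Real.sin_neg, Real.cos_neg,
    Real.sin_pi, Real.cos_pi, Real.sin_add, Real.cos_add, Real.sin_sub, Real.cos_sub,
    Real.cos_pi_sub, Real.sin_pi_sub, neg_zero, Real.sin_zero, Real.cos_zero, one_mul, zero_mul, mul_zero, zero_add, add_zero, mul_one] at e1 e2
  have key1 : μ1 * ((μ2 - μ4) * (Real.sin θ2 * (2*Real.cos θ2 - 1))) / (2 - 2*Real.cos θ2) = 0 := by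
    rw [← e1]; field_simp; ring
  have key2 : μ3 * ((μ2 - μ4) * (Real.sin θ2 * (2*Real.cos θ2 + 1))) / (2 + 2*Real.cos θ2) = 0 := by
    have hc1 : 1 + Real.cos θ2 ≠ 0 := fun h => hcosm1 (by linarith)
    rw [← e2]; simp only [neg_one_mul, mul_neg, sub_neg_eq_add]; field_simp; ring
  by_contra hne
  have h42 : μ4 - μ2 ≠ 0 := sub_ne_zero.mpr (fun h => hne h.symm)
  have h24 : μ2 - μ4 ≠ 0 := sub_ne_zero.mpr hne
  have k1 : 2*Real.cos θ2 - 1 = 0 := by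
    rcases div_eq_zero_iff.mp key1 with h | h
    · rcases mul_eq_zero.mp h with h' | h'
      · exact absurd h' h1
      · rcases mul_eq_zero.mp h' with h'' | h''
        · exact absurd h'' h24
        · rcases mul_eq_zero.mp h'' with h3' | h3'
          · exact absurd h3' hsin
          · exact h3'
    · exact absurd h hden1
  have k2 : 2*Real.cos θ2 + 1 = 0 := by
    rcases div_eq_zero_iff.mp key2 with h | h
    · rcases mul_eq_zero.mp h with h' | h'
      · exact absurd h' h3
      · rcases mul_eq_zero.mp h' with h'' | h''
        · exact absurd h'' h24
        · rcases mul_eq_zero.mp h'' with h3' | h3'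
          · exact absurd h3' hsin
          · exact h3'
    · exact absurd h hden2
  linarith
end

section
/- Let μ1, μ3 be nonzero real numbers, set μ2 = μ1 and μ4 = μ1, and let H be the Hessian matrix of V at the kite point (0, 2π/3, π, −2π/3). Then 0 is a root of the characteristic polynomial of H of multiplicity exactly one if and only if μ1 ≠ 3μ3 and μ1 ≠ −3μ3. (That is, the kite with θ2 = 2π/3 and μ1 = μ2 = μ4 is a nondegenerate critical point of V, up to rotational symmetry, exactly when μ1 ≠ ±3μ3.) -/
open Real Polynomial

/-! ### Auxiliary material -/

noncomputable def gfun (x : ℝ) : ℝ := Real.cos x + (1/2) * Real.log (2 - 2*Real.cos x)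
noncomputable def g1 (x : ℝ) : ℝ := -Real.sin x + Real.sin x / (2 - 2*Real.cos x)
noncomputable def g2 (x : ℝ) : ℝ := -Real.cos x - 1/(2 - 2*Real.cos x)

lemma two_sub_ne {x : ℝ} (h : Real.cos x ≠ 1) : 2 - 2*Real.cos x ≠ 0 := by
  have := Real.cos_le_one x
  intro h0; apply h; linarith

lemma g1_zero : g1 0 = 0 := by simp [g1]

lemma g1_odd (x : ℝ) : g1 (-x) = -g1 x := by
  simp [g1, Real.sin_neg, Real.cos_neg, neg_div]; ring

lemma g2_even (x : ℝ) : g2 (-x) = g2 x := by simp [g2, Real.cos_neg]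

lemma hasDerivAt_gfun {x : ℝ} (h : Real.cos x ≠ 1) : HasDerivAt gfun (g1 x) x := by
  have h2 := two_sub_ne h
  have hd : HasDerivAt (fun δ : ℝ => 2 - 2*Real.cos δ) (2*Real.sin x) x := by
    have := ((Real.hasDerivAt_cos x).const_mul 2).const_sub 2
    exact this.congr_deriv (by ring)
  have hl := (hd.log h2).const_mul (1/2)
  have := (Real.hasDerivAt_cos x).add hl
  refine this.congr_deriv (Eq.symm ?_)
  unfold g1; field_simp

lemma hasDerivAt_g1 {x : ℝ} (h : Real.cos x ≠ 1) : HasDerivAt g1 (g2 x) x := by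
  have h2 := two_sub_ne h
  have hd : HasDerivAt (fun δ : ℝ => 2 - 2*Real.cos δ) (2*Real.sin x) x := by
    have := ((Real.hasDerivAt_cos x).const_mul 2).const_sub 2
    exact this.congr_deriv (by ring)
  have hq := (Real.hasDerivAt_sin x).div hd h2
  have := (Real.hasDerivAt_sin x).neg.add hq
  refine this.congr_deriv (Eq.symm ?_)
  unfold g2
  have hs := Real.sin_sq_add_cos_sq x
  have hn : Real.cos x * (2 - 2*Real.cos x) - Real.sin x * (2*Real.sin x)
      = -(2 - 2*Real.cos x) := by linear_combination (-2 : ℝ) * hs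
  rw [hn]
  field_simp
  ring

lemma V_apply (μ θ : Fin 4 → ℝ) : V μ θ =
    -(μ 0*μ 1*gfun (θ 0-θ 1) + μ 0*μ 2*gfun (θ 0-θ 2) + μ 0*μ 3*gfun (θ 0-θ 3)
      + μ 1*μ 2*gfun (θ 1-θ 2) + μ 1*μ 3*gfun (θ 1-θ 3) + μ 2*μ 3*gfun (θ 2-θ 3)) := by
  have e0 : Finset.Ioi (0 : Fin 4) = {1, 2, 3} := by decide
  have e1 : Finset.Ioi (1 : Fin 4) = {2, 3} := by decide
  have e2 : Finset.Ioi (2 : Fin 4) = {3} := by decide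
  have e3 : Finset.Ioi (3 : Fin 4) = ∅ := by decide
  simp [V, gfun, Fin.sum_univ_four, e0, e1, e2, e3, Finset.sum_insert, Finset.mem_insert]
  ring

noncomputable def pd (μ θ : Fin 4 → ℝ) (k : Fin 4) : ℝ :=
  -∑ j : Fin 4, μ k * μ j * g1 (θ k - θ j)

lemma hasDerivAt_gsub (c x : ℝ) (h : Real.cos (x - c) ≠ 1) :
    HasDerivAt (fun t => gfun (t - c)) (g1 (x - c)) x := by
  simpa [Function.comp_def] using (hasDerivAt_gfun h).comp x ((hasDerivAt_id x).sub_const c)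

lemma hasDerivAt_gsub' (c x : ℝ) (h : Real.cos (c - x) ≠ 1) :
    HasDerivAt (fun t => gfun (c - t)) (g1 (x - c)) x := by
  have := (hasDerivAt_gfun h).comp x ((hasDerivAt_id x).const_sub c)
  have h2 : g1 (c - x) * -1 = g1 (x - c) := by
    rw [show x - c = -(c - x) by ring, g1_odd]; ring
  simpa [h2, Function.comp_def] using this

lemma partialV_eq (μ θ : Fin 4 → ℝ)
    (hnd : ∀ i j : Fin 4, i ≠ j → Real.cos (θ i - θ j) ≠ 1) (k : Fin 4) :
    partialV μ θ k = pd μ θ k := by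
  fin_cases k
  · show partialV μ θ 0 = pd μ θ 0
    have e : (fun t => V μ (Function.update θ 0 t)) = fun t =>
        -((μ 0*μ 1*gfun (t - θ 1) + μ 0*μ 2*gfun (t - θ 2) + μ 0*μ 3*gfun (t - θ 3))
          + (μ 1*μ 2*gfun (θ 1-θ 2) + μ 1*μ 3*gfun (θ 1-θ 3) + μ 2*μ 3*gfun (θ 2-θ 3))) := by
      funext t; rw [V_apply]; simp [Function.update]; ring
    have H := ((((hasDerivAt_gsub (θ 1) (θ 0) (hnd 0 1 (by decide))).const_mul (μ 0*μ 1)).fun_add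
        ((hasDerivAt_gsub (θ 2) (θ 0) (hnd 0 2 (by decide))).const_mul (μ 0*μ 2))).fun_add
        ((hasDerivAt_gsub (θ 3) (θ 0) (hnd 0 3 (by decide))).const_mul (μ 0*μ 3))).add_const
        (μ 1*μ 2*gfun (θ 1-θ 2) + μ 1*μ 3*gfun (θ 1-θ 3) + μ 2*μ 3*gfun (θ 2-θ 3)) |>.fun_neg
    rw [partialV, e, H.deriv, pd, Fin.sum_univ_four]
    simp only [sub_self, g1_zero]; ring
  · show partialV μ θ 1 = pd μ θ 1
    have e : (fun t => V μ (Function.update θ 1 t)) = fun t =>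
        -((μ 0*μ 1*gfun (θ 0 - t) + μ 1*μ 2*gfun (t - θ 2) + μ 1*μ 3*gfun (t - θ 3))
          + (μ 0*μ 2*gfun (θ 0-θ 2) + μ 0*μ 3*gfun (θ 0-θ 3) + μ 2*μ 3*gfun (θ 2-θ 3))) := by
      funext t; rw [V_apply]; simp [Function.update]; ring
    have H := ((((hasDerivAt_gsub' (θ 0) (θ 1) (hnd 0 1 (by decide))).const_mul (μ 0*μ 1)).fun_add
        ((hasDerivAt_gsub (θ 2) (θ 1) (hnd 1 2 (by decide))).const_mul (μ 1*μ 2))).fun_add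
        ((hasDerivAt_gsub (θ 3) (θ 1) (hnd 1 3 (by decide))).const_mul (μ 1*μ 3))).add_const
        (μ 0*μ 2*gfun (θ 0-θ 2) + μ 0*μ 3*gfun (θ 0-θ 3) + μ 2*μ 3*gfun (θ 2-θ 3)) |>.fun_neg
    rw [partialV, e, H.deriv, pd, Fin.sum_univ_four]
    simp only [sub_self, g1_zero]; ring
  · show partialV μ θ 2 = pd μ θ 2
    have e : (fun t => V μ (Function.update θ 2 t)) = fun t =>
        -((μ 0*μ 2*gfun (θ 0 - t) + μ 1*μ 2*gfun (θ 1 - t) + μ 2*μ 3*gfun (t - θ 3))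
          + (μ 0*μ 1*gfun (θ 0-θ 1) + μ 0*μ 3*gfun (θ 0-θ 3) + μ 1*μ 3*gfun (θ 1-θ 3))) := by
      funext t; rw [V_apply]; simp [Function.update]; ring
    have H := ((((hasDerivAt_gsub' (θ 0) (θ 2) (hnd 0 2 (by decide))).const_mul (μ 0*μ 2)).fun_add
        ((hasDerivAt_gsub' (θ 1) (θ 2) (hnd 1 2 (by decide))).const_mul (μ 1*μ 2))).fun_add
        ((hasDerivAt_gsub (θ 3) (θ 2) (hnd 2 3 (by decide))).const_mul (μ 2*μ 3))).add_const
        (μ 0*μ 1*gfun (θ 0-θ 1) + μ 0*μ 3*gfun (θ 0-θ 3) + μ 1*μ 3*gfun (θ 1-θ 3)) |>.fun_neg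
    rw [partialV, e, H.deriv, pd, Fin.sum_univ_four]
    simp only [sub_self, g1_zero]; ring
  · show partialV μ θ 3 = pd μ θ 3
    have e : (fun t => V μ (Function.update θ 3 t)) = fun t =>
        -((μ 0*μ 3*gfun (θ 0 - t) + μ 1*μ 3*gfun (θ 1 - t) + μ 2*μ 3*gfun (θ 2 - t))
          + (μ 0*μ 1*gfun (θ 0-θ 1) + μ 0*μ 2*gfun (θ 0-θ 2) + μ 1*μ 2*gfun (θ 1-θ 2))) := by
      funext t; rw [V_apply]; simp [Function.update]; ring
    have H := ((((hasDerivAt_gsub' (θ 0) (θ 3) (hnd 0 3 (by decide))).const_mul (μ 0*μ 3)).fun_add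
        ((hasDerivAt_gsub' (θ 1) (θ 3) (hnd 1 3 (by decide))).const_mul (μ 1*μ 3))).fun_add
        ((hasDerivAt_gsub' (θ 2) (θ 3) (hnd 2 3 (by decide))).const_mul (μ 2*μ 3))).add_const
        (μ 0*μ 1*gfun (θ 0-θ 1) + μ 0*μ 2*gfun (θ 0-θ 2) + μ 1*μ 2*gfun (θ 1-θ 2)) |>.fun_neg
    rw [partialV, e, H.deriv, pd, Fin.sum_univ_four]
    simp only [sub_self, g1_zero]; ring

lemma hasDerivAt_g1sub (c x : ℝ) (h : Real.cos (x - c) ≠ 1) :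
    HasDerivAt (fun t => g1 (t - c)) (g2 (x - c)) x := by
  simpa [Function.comp_def] using (hasDerivAt_g1 h).comp x ((hasDerivAt_id x).sub_const c)

lemma hasDerivAt_g1sub' (c x : ℝ) (h : Real.cos (c - x) ≠ 1) :
    HasDerivAt (fun t => g1 (c - t)) (-g2 (c - x)) x := by
  have := (hasDerivAt_g1 h).comp x ((hasDerivAt_id x).const_sub c)
  simpa [mul_comm, Function.comp_def] using this

lemma update_continuous (θ : Fin 4 → ℝ) (k i : Fin 4) :
    Continuous fun t : ℝ => Function.update θ k t i := by
  by_cases h : i = k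
  · subst h; simp only [Function.update_self]; exact continuous_id
  · simp only [Function.update_of_ne h]; exact continuous_const

lemma hessV_eq (μ θ : Fin 4 → ℝ)
    (hnd : ∀ i j : Fin 4, i ≠ j → Real.cos (θ i - θ j) ≠ 1) (k l : Fin 4) :
    hessV μ θ k l = if k = l then -∑ j ∈ Finset.univ.erase k, μ k * μ j * g2 (θ k - θ j)
      else μ k * μ l * g2 (θ k - θ l) := by
  have hev : ∀ᶠ t in nhds (θ k), ∀ i j : Fin 4, i ≠ j →
      Real.cos (Function.update θ k t i - Function.update θ k t j) ≠ 1 := by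
    rw [Filter.eventually_all]
    intro i
    rw [Filter.eventually_all]
    intro j
    by_cases hij : i = j
    · filter_upwards with t h; exact absurd hij h
    · have hc : Continuous fun t : ℝ =>
          Real.cos (Function.update θ k t i - Function.update θ k t j) :=
        Real.continuous_cos.comp ((update_continuous θ k i).sub (update_continuous θ k j))
      have hval : Real.cos (Function.update θ k (θ k) i - Function.update θ k (θ k) j) ≠ 1 := by
        rw [Function.update_eq_self]; exact hnd i j hij
      filter_upwards [hc.continuousAt.eventually_ne hval] with t ht _
      exact ht
  have heq : (fun t => partialV μ (Function.update θ k t) l)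
      =ᶠ[nhds (θ k)] fun t => pd μ (Function.update θ k t) l :=
    hev.mono fun t ht => partialV_eq μ _ ht l
  show deriv (fun t => partialV μ (Function.update θ k t) l) (θ k) = _
  rw [heq.deriv_eq]
  by_cases hkl : k = l
  · subst hkl
    rw [if_pos rfl]
    have e : (fun t => pd μ (Function.update θ k t) k)
        = fun t => -∑ j ∈ Finset.univ.erase k, μ k * μ j * g1 (t - θ j) := by
      funext t
      rw [pd, ← Finset.add_sum_erase _ _ (Finset.mem_univ k), Function.update_self,
        sub_self, g1_zero, mul_zero, zero_add]
      congr 1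
      apply Finset.sum_congr rfl
      intro j hj
      rw [Function.update_of_ne (Finset.mem_erase.1 hj).1]
    rw [e]
    have H : HasDerivAt (fun t => ∑ j ∈ Finset.univ.erase k, μ k * μ j * g1 (t - θ j))
        (∑ j ∈ Finset.univ.erase k, μ k * μ j * g2 (θ k - θ j)) (θ k) := by
      apply HasDerivAt.fun_sum
      intro j hj
      exact (hasDerivAt_g1sub (θ j) (θ k)
        (hnd k j (Ne.symm (Finset.mem_erase.1 hj).1))).const_mul _
    exact H.neg.deriv
  · rw [if_neg hkl]
    have hlk : l ≠ k := fun h => hkl h.symm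
    have e : (fun t => pd μ (Function.update θ k t) l)
        = fun t => -(μ l * μ k * g1 (θ l - t)
            + ∑ j ∈ Finset.univ.erase k, μ l * μ j * g1 (θ l - θ j)) := by
      funext t
      rw [pd, ← Finset.add_sum_erase _ _ (Finset.mem_univ k), Function.update_of_ne hlk,
        Function.update_self]
      congr 2
      apply Finset.sum_congr rfl
      intro j hj
      rw [Function.update_of_ne (Finset.mem_erase.1 hj).1]
    rw [e]
    have H := (((hasDerivAt_g1sub' (θ l) (θ k)
        (hnd l k hlk)).const_mul (μ l * μ k)).add_const
        (∑ j ∈ Finset.univ.erase k, μ l * μ j * g1 (θ l - θ j))).fun_neg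
    rw [H.deriv]
    have : g2 (θ l - θ k) = g2 (θ k - θ l) := by
      rw [show θ l - θ k = -(θ k - θ l) by ring, g2_even]
    rw [this]; ring

lemma cos_2pi3 : Real.cos (2*π/3) = -(1/2) := by
  rw [show 2*π/3 = π - π/3 by ring, Real.cos_pi_sub, Real.cos_pi_div_three]
lemma cos_4pi3 : Real.cos (4*π/3) = -(1/2) := by
  rw [show 4*π/3 = π/3 + π by ring, Real.cos_add_pi, Real.cos_pi_div_three]
lemma cos_5pi3 : Real.cos (5*π/3) = 1/2 := by
  rw [show 5*π/3 = 2*π/3 + π by ring, Real.cos_add_pi, cos_2pi3]; norm_num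

lemma kite_nd : ∀ i j : Fin 4, i ≠ j →
    Real.cos ((![0, 2*π/3, π, -(2*π/3)] : Fin 4 → ℝ) i - ![0, 2*π/3, π, -(2*π/3)] j) ≠ 1 := by
  intro i j hij
  fin_cases i <;> fin_cases j <;> simp_all <;>
    norm_num [cos_2pi3, show 2*π/3+2*π/3 = 4*π/3 by ring, show π+2*π/3 = 5*π/3 by ring,
      cos_4pi3, cos_5pi3, show -(2*π/3)-2*π/3 = -(4*π/3) by ring, Real.cos_neg]

noncomputable def Mkite (a b : ℝ) : Matrix (Fin 4) (Fin 4) ℝ :=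
  !![-(a^2/3) - 3*a*b/4, a^2/6, 3*a*b/4, a^2/6;
     a^2/6, -(a^2/3) + 3*a*b/2, -(3*a*b/2), a^2/6;
     3*a*b/4, -(3*a*b/2), 9*a*b/4, -(3*a*b/2);
     a^2/6, a^2/6, -(3*a*b/2), -(a^2/3) + 3*a*b/2]

lemma hess_kite (a b : ℝ) :
    hessV ![a, a, b, a] ![0, 2*π/3, π, -(2*π/3)] = Mkite a b := by
  have e0 : Finset.univ.erase (0 : Fin 4) = {1, 2, 3} := by decide
  have e1 : Finset.univ.erase (1 : Fin 4) = {0, 2, 3} := by decide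
  have e2 : Finset.univ.erase (2 : Fin 4) = {0, 1, 3} := by decide
  have e3 : Finset.univ.erase (3 : Fin 4) = {0, 1, 2} := by decide
  ext i j
  fin_cases i <;> fin_cases j <;>
    rw [hessV_eq _ _ kite_nd] <;>
    simp [Mkite, e0, e1, e2, e3, Finset.sum_insert, Finset.mem_insert, g2,
      Real.cos_pi_div_three, cos_2pi3, cos_4pi3, cos_5pi3, Real.cos_neg, Real.cos_pi,
      show (0:ℝ) - 2*π/3 = -(2*π/3) by ring, show (0:ℝ) - π = -π by ring,
      show (0:ℝ) - -(2*π/3) = 2*π/3 by ring, show 2*π/3 - 0 = 2*π/3 by ring,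
      show 2*π/3 - π = -(π/3) by ring, show 2*π/3 - -(2*π/3) = 4*π/3 by ring,
      show π - (0:ℝ) = π by ring, show π - 2*π/3 = π/3 by ring,
      show π - -(2*π/3) = 5*π/3 by ring, show -(2*π/3) - 0 = -(2*π/3) by ring,
      show -(2*π/3) - 2*π/3 = -(4*π/3) by ring, show -(2*π/3) - π = -(5*π/3) by ring] <;>
    norm_num <;> ring

theorem det_fin_four' {R : Type*} [CommRing R] (A : Matrix (Fin 4) (Fin 4) R) :
    A.det =
      A 0 0 * (A 1 1 * (A 2 2 * A 3 3 - A 2 3 * A 3 2) - A 1 2 * (A 2 1 * A 3 3 - A 2 3 * A 3 1)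
        + A 1 3 * (A 2 1 * A 3 2 - A 2 2 * A 3 1))
      - A 0 1 * (A 1 0 * (A 2 2 * A 3 3 - A 2 3 * A 3 2) - A 1 2 * (A 2 0 * A 3 3 - A 2 3 * A 3 0)
        + A 1 3 * (A 2 0 * A 3 2 - A 2 2 * A 3 0))
      + A 0 2 * (A 1 0 * (A 2 1 * A 3 3 - A 2 3 * A 3 1) - A 1 1 * (A 2 0 * A 3 3 - A 2 3 * A 3 0)
        + A 1 3 * (A 2 0 * A 3 1 - A 2 1 * A 3 0))
      - A 0 3 * (A 1 0 * (A 2 1 * A 3 2 - A 2 2 * A 3 1) - A 1 1 * (A 2 0 * A 3 2 - A 2 2 * A 3 0)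
        + A 1 2 * (A 2 0 * A 3 1 - A 2 1 * A 3 0)) := by
  rw [Matrix.det_succ_row_zero, Fin.sum_univ_four]
  norm_num [Matrix.det_fin_three, Matrix.submatrix_apply, Fin.succAbove, Fin.lt_def,
    show Fin.succ 2 = (3:Fin 4) from rfl, show ((3:Fin 4):ℕ) = 3 from rfl,
    show Fin.castSucc 2 = (2:Fin 4) from rfl]
  ring

lemma charpoly_Mkite (a b : ℝ) : (Mkite a b).charpoly
    = X^4 + C (a^2 - 9/2*a*b) * X^3 + C (a^4/4 - 15/4*a^3*b) * X^2
      + C (27/4*a^3*b^3 - 3/4*a^5*b) * X := by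
  rw [Matrix.charpoly, det_fin_four']
  apply Polynomial.funext
  intro r
  simp [Matrix.charmatrix, Mkite]
  ring

lemma rm_key (a b : ℝ) (h1 : a ≠ 0) (h3 : b ≠ 0)
    (p : ℝ[X])
    (hp : p = X^4 + C (a^2 - 9/2*a*b) * X^3 + C (a^4/4 - 15/4*a^3*b) * X^2
      + C (27/4*a^3*b^3 - 3/4*a^5*b) * X) :
    p.rootMultiplicity 0 = 1 ↔ a ≠ 3 * b ∧ a ≠ -3 * b := by
  have hc0 : p.coeff 0 = 0 := by
    rw [hp]
    simp only [coeff_add, coeff_C_mul, coeff_X_pow, coeff_X_zero]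
    norm_num
  have hc1 : p.coeff 1 = 27/4*a^3*b^3 - 3/4*a^5*b := by
    rw [hp]
    simp only [coeff_add, coeff_C_mul, coeff_X_pow, coeff_X_one]
    norm_num
  have hc4 : p.coeff 4 = 1 := by
    rw [hp]
    simp only [coeff_add, coeff_C_mul, coeff_X_pow, coeff_X]
    norm_num
  have hp0 : p ≠ 0 := fun h => by simp [h] at hc4
  have key : p.rootMultiplicity 0 = 1 ↔ p.coeff 1 ≠ 0 := by
    constructor
    · intro h hc
      have h2 : 2 ≤ p.rootMultiplicity 0 := by
        rw [Polynomial.le_rootMultiplicity_iff hp0]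
        simp only [Polynomial.C_0, sub_zero]
        refine Polynomial.X_pow_dvd_iff.2 fun d hd => ?_
        interval_cases d
        · exact hc0
        · exact hc
      omega
    · intro hc
      have hge : 1 ≤ p.rootMultiplicity 0 := by
        rw [Polynomial.le_rootMultiplicity_iff hp0]
        simp only [Polynomial.C_0, sub_zero]
        refine Polynomial.X_pow_dvd_iff.2 fun d hd => ?_
        interval_cases d
        exact hc0
      have hle : p.rootMultiplicity 0 ≤ 1 := by
        rw [Polynomial.rootMultiplicity_le_iff hp0]
        simp only [Polynomial.C_0, sub_zero]
        intro hdvd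
        exact hc (Polynomial.X_pow_dvd_iff.1 hdvd 1 (by norm_num))
      omega
  rw [key, hc1]
  constructor
  · intro h
    constructor
    · intro heq; apply h; rw [heq]; ring
    · intro heq; apply h; rw [heq]; ring
  · rintro ⟨ha, hb⟩ heq
    have hfact : 27/4*a^3*b^3 - 3/4*a^5*b = -(3/4)*a^3*b*((a-3*b)*(a+3*b)) := by ring
    rw [hfact] at heq
    have h34 : (-(3/4) : ℝ) ≠ 0 := by norm_num
    rcases mul_eq_zero.1 heq with h' | h'
    · rcases mul_eq_zero.1 h' with h'' | h''
      · rcases mul_eq_zero.1 h'' with h3' | h3'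
        · exact h34 h3'
        · exact h1 (pow_eq_zero_iff (by norm_num) |>.1 h3')
      · exact h3 h''
    · rcases mul_eq_zero.1 h' with h'' | h''
      · exact ha (by linarith [sub_eq_zero.1 h''])
      · apply hb; have := eq_neg_of_add_eq_zero_left h''; linarith

/-- The kite `(0, 2pi/3, pi, -2pi/3)` with `mu2 = mu4 = mu1` is a
nondegenerate critical point (0 is a simple root of the characteristic
polynomial of the Hessian) iff `mu1` is not `3mu3` or `-3mu3`. -/
theorem kite_nondegenerate_iff (μ1 μ3 : ℝ) (h1 : μ1 ≠ 0) (h3 : μ3 ≠ 0) :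
    (hessV ![μ1, μ1, μ3, μ1] ![0, 2 * π / 3, π, -(2 * π / 3)]).charpoly.rootMultiplicity 0 = 1 ↔
      μ1 ≠ 3 * μ3 ∧ μ1 ≠ -3 * μ3 := by
  rw [hess_kite μ1 μ3]
  exact rm_key μ1 μ3 h1 h3 _ (charpoly_Mkite μ1 μ3)
end
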